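/- Refined dual strong convexity (Proposition 5, first part): Assume for each i there is a function γ_i(·) ≥ 0 such that for all a, b ∈ ℝ and every u ∈ ∂φ_i*(−b), φ_i*(−a) − φ_i*(−b) + u(a−b) ≥ γ_i(u)·(a−b)². Set γ_i = γ_i(w*ᵀx_i). Then for every α ∈ ℝⁿ with φ_i*(−α_i) < ∞ for all i, with w = w(α): D(α*) − D(α) ≥ (1/n)∑_{i=1}^n γ_i (α_i − α*_i)² + (λ/2)‖w − w*‖². -/

import Mathlib

open scoped BigOperators RealInnerProductSpace
open Finset

/-- The convex conjugate `φ*(u) = sup_z (z*u - φ z)` (as a real number; junk value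
when the supremum is not finite). -/
noncomputable def fconj (φ : ℝ → ℝ) (u : ℝ) : ℝ := ⨆ z : ℝ, (z * u - φ z)

/-- `φ*(u) < ∞`, i.e. the defining supremum of the conjugate is finite. -/
def FiniteConj (φ : ℝ → ℝ) (u : ℝ) : Prop :=
  BddAbove (Set.range fun z => z * u - φ z)

/-- `g ∈ ∂φ(a)`: `g` is a subgradient of `φ` at `a`. -/
def IsSubgrad (φ : ℝ → ℝ) (a g : ℝ) : Prop :=
  ∀ b, φ a + g * (b - a) ≤ φ b

/-- `u ∈ ∂φ*(b)`: `u` is a subgradient of the conjugate `φ*` at `b`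
(the subgradient inequality being required at all points where `φ*` is finite). -/
def ConjSubgrad (φ : ℝ → ℝ) (b u : ℝ) : Prop :=
  FiniteConj φ b ∧ ∀ v, FiniteConj φ v → fconj φ b + u * (v - b) ≤ fconj φ v

/-- Dual feasibility: `φ_i*(-α_i) < ∞` for all `i`. -/
def Feas {n : ℕ} (φ : Fin n → ℝ → ℝ) (α : Fin n → ℝ) : Prop :=
  ∀ i, FiniteConj (φ i) (-(α i))

/-- `w(α) = (1/(λ n)) ∑ι α_i x_i`. -/
noncomputable def wvec {n d : ℕ} (lam : ℝ) (x : Fin n → EuclideanSpace ℝ (Fin d))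
    (α : Fin n → ℝ) : EuclideanSpace ℝ (Fin d) :=
  (1 / (lam * (n : ℝ))) • ∑ i, α i • x i

/-- The primal objective `P(w)`. -/
noncomputable def primalObj {n d : ℕ} (lam : ℝ) (x : Fin n → EuclideanSpace ℝ (Fin d))
    (φ : Fin n → ℝ → ℝ) (w : EuclideanSpace ℝ (Fin d)) : ℝ :=
  (1 / (n : ℝ)) * ∑ i, φ i ⟪x i, w⟫ + lam / 2 * ‖w‖ ^ 2

/-- The dual objective `D(α)`. -/
noncomputable def dualObj {n d : ℕ} (lam : ℝ) (x : Fin n → EuclideanSpace ℝ (Fin d))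
    (φ : Fin n → ℝ → ℝ) (α : Fin n → ℝ) : ℝ :=
  (1 / (n : ℝ)) * ∑ i, -(fconj (φ i) (-(α i))) - lam / 2 * ‖wvec lam x α‖ ^ 2

/-- The SDCA trajectory: `α^(0) = α0`, `α^(t+1) = step α^(t) (idx t)`. -/
noncomputable def traj {n : ℕ} (step : (Fin n → ℝ) → Fin n → (Fin n → ℝ))
    (α0 : Fin n → ℝ) (idx : ℕ → Fin n) : ℕ → (Fin n → ℝ)
  | 0 => α0
  | t + 1 => step (traj step α0 idx t) (idx t)

/-- Expectation over the first `t` coordinates of a uniformly random i.i.d. index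
sequence, applied to a function `g` of the index sequence (which should depend
only on the first `t` indices). -/
noncomputable def ExpIdx {n : ℕ} (hn : 0 < n) (t : ℕ) (g : (ℕ → Fin n) → ℝ) : ℝ :=
  (∑ idx : Fin t → Fin n,
      g (fun k => if h : k < t then idx ⟨k, h⟩ else (⟨0, hn⟩ : Fin n))) / (n : ℝ) ^ t

/-- Proposition 5 (first part): refined dual strong convexity. Under the
refined conjugate strong-convexity condition with moduli `γᵢ(·) ≥ 0`, setting
`γᵢ = γᵢ(w*ᵀxᵢ)`, for every dual-feasible `α` with `w = w(α)`:
`D(α*) - D(α) ≥ (1/n) ∑ᵢ γᵢ (αᵢ - α*ᵢ)² + (λ/2)‖w - w*‖²`. -/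
theorem refined_dual_strong_convexity
    (n d : ℕ) (hn : 1 ≤ n)
    (x : Fin n → EuclideanSpace ℝ (Fin d))
    (φ : Fin n → ℝ → ℝ) (hconv : ∀ i, ConvexOn ℝ Set.univ (φ i))
    (lam : ℝ) (hlam : 0 < lam)
    (γfun : Fin n → ℝ → ℝ) (hγ : ∀ i u, 0 ≤ γfun i u)
    (hrsc : ∀ i, ∀ a b u : ℝ, FiniteConj (φ i) (-a) → ConjSubgrad (φ i) (-b) u →
      γfun i u * (a - b) ^ 2 ≤ fconj (φ i) (-a) - fconj (φ i) (-b) + u * (a - b))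
    (wstar : EuclideanSpace ℝ (Fin d))
    (hwmin : ∀ w, primalObj lam x φ wstar ≤ primalObj lam x φ w)
    (αstar : Fin n → ℝ) (hstar_feas : Feas φ αstar)
    (hstar_max : ∀ β, Feas φ β → dualObj lam x φ β ≤ dualObj lam x φ αstar)
    (hws : wvec lam x αstar = wstar)
    (hsub_conj : ∀ i, ConjSubgrad (φ i) (-(αstar i)) ⟪x i, wstar⟫)
    (hsub : ∀ i, IsSubgrad (φ i) ⟪x i, wstar⟫ (-(αstar i)))
    (α : Fin n → ℝ) (hα : Feas φ α) :
    (1 / (n : ℝ)) * ∑ i, γfun i ⟪x i, wstar⟫ * (α i - αstar i) ^ 2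
        + lam / 2 * ‖wvec lam x α - wstar‖ ^ 2
      ≤ dualObj lam x φ αstar - dualObj lam x φ α := by
  have hn' : (0:ℝ) < n := by exact_mod_cast Nat.lt_of_lt_of_le Nat.zero_lt_one hn
  have hln : lam * (n:ℝ) ≠ 0 := ne_of_gt (mul_pos hlam hn')
  set w := wvec lam x α with hwdef
  -- sum inequality from refined strong convexity
  have hG : ∑ i, γfun i ⟪x i, wstar⟫ * (α i - αstar i) ^ 2 ≤
      ∑ i, ((fconj (φ i) (-(α i)) - fconj (φ i) (-(αstar i)))
        + ⟪x i, wstar⟫ * (α i - αstar i)) :=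
    Finset.sum_le_sum fun i _ => hrsc i (α i) (αstar i) _ (hα i) (hsub_conj i)
  -- linearity of wvec
  have hw : w - wstar = (1/(lam*(n:ℝ))) • ∑ i, (α i - αstar i) • x i := by
    rw [hwdef, ← hws]
    simp [wvec, ← smul_sub, ← Finset.sum_sub_distrib, sub_smul]
  have hT : ∑ i, ⟪x i, wstar⟫ * (α i - αstar i)
      = lam * (n:ℝ) * ⟪w - wstar, wstar⟫ := by
    rw [hw, real_inner_smul_left, sum_inner]
    simp only [real_inner_smul_left]
    field_simp
    exact Finset.sum_congr rfl fun i _ => mul_comm _ _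
  have hInner : ⟪w - wstar, wstar⟫ = ⟪w, wstar⟫ - ‖wstar‖^2 := by
    rw [inner_sub_left, real_inner_self_eq_norm_sq]
  have hNorm : ‖w - wstar‖^2 = ‖w‖^2 - 2*⟪w, wstar⟫ + ‖wstar‖^2 :=
    norm_sub_sq_real w wstar
  have hD : dualObj lam x φ αstar - dualObj lam x φ α
      = (1/(n:ℝ)) * ∑ i, (fconj (φ i) (-(α i)) - fconj (φ i) (-(αstar i)))
        + lam/2 * (‖w‖^2 - ‖wstar‖^2) := by
    simp only [dualObj, hws, ← hwdef, Finset.sum_sub_distrib, Finset.sum_neg_distrib]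
    ring
  rw [hD, hNorm]
  rw [Finset.sum_add_distrib, hT, hInner] at hG
  have hG' : (1/(n:ℝ)) * ∑ i, γfun i ⟪x i, wstar⟫ * (α i - αstar i) ^ 2
      ≤ (1/(n:ℝ)) * (∑ i, (fconj (φ i) (-(α i)) - fconj (φ i) (-(αstar i)))
        + lam * (n:ℝ) * (⟪w, wstar⟫ - ‖wstar‖^2)) := by
    apply mul_le_mul_of_nonneg_left hG
    positivity
  have hx : (1/(n:ℝ)) * (lam * (n:ℝ) * (⟪w, wstar⟫ - ‖wstar‖^2))
      = lam * (⟪w, wstar⟫ - ‖wstar‖^2) := by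
    field_simp
  nlinarith [hG', hx]
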